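/- Let S be a finite nonempty set, f : S → [0, c] a function with 0 < c < 1, and define q_t = (∑_{n ∈ S₀} f(n)^t)/(∑_{n ∈ S₀} f(n)^t + |S₁|) where S = S₀ ⊔ S₁ is a partition with S₁ nonempty. Then for all integers r < t, q_t ≤ c^{t-r} · q_r/(1 - q_r). -/

import Mathlib

theorem finset_passing_prob_bound {α : Type*} [DecidableEq α]
    (S S0 S1 : Finset α) (hU : S0 ∪ S1 = S) (hdisj : Disjoint S0 S1)
    (hS : S.Nonempty) (hS1 : S1.Nonempty)
    (f : α → ℝ) (c : ℝ) (hc0 : 0 < c) (hc1 : c < 1)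
    (hf0 : ∀ n ∈ S, 0 ≤ f n) (hfc : ∀ n ∈ S, f n ≤ c)
    (q : ℕ → ℝ)
    (hq : ∀ u, q u = (∑ n ∈ S0, f n ^ u) / ((∑ n ∈ S0, f n ^ u) + (S1.card : ℝ)))
    (r t : ℕ) (hrt : r < t) :
    q t ≤ c ^ (t - r) * q r / (1 - q r) := by
  set B : ℝ := (S1.card : ℝ) with hBdef
  have hB : 0 < B := by
    rw [hBdef]; exact_mod_cast Finset.card_pos.mpr hS1
  have hsub : S0 ⊆ S := by rw [← hU]; exact Finset.subset_union_left
  set A : ℕ → ℝ := fun u => ∑ n ∈ S0, f n ^ u with hAdef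
  have hA : ∀ u, 0 ≤ A u := fun u =>
    Finset.sum_nonneg fun n hn => pow_nonneg (hf0 n (hsub hn)) u
  have hkey : A t ≤ c ^ (t - r) * A r := by
    rw [hAdef, Finset.mul_sum]
    apply Finset.sum_le_sum
    intro n hn
    have h0 : 0 ≤ f n := hf0 n (hsub hn)
    have hle : f n ≤ c := hfc n (hsub hn)
    calc f n ^ t = f n ^ (t - r) * f n ^ r := by
          rw [← pow_add]; congr 1; omega
      _ ≤ c ^ (t - r) * f n ^ r := by
          gcongr
  have hAB : 0 < A r + B := by linarith [hA r]
  have h1 : (1 : ℝ) - q r = B / (A r + B) := by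
    rw [hq]; change (1:ℝ) - A r / (A r + B) = B / (A r + B); field_simp; ring
  have hrhs : c ^ (t - r) * q r / (1 - q r) = c ^ (t - r) * A r / B := by
    rw [h1, hq]
    change c ^ (t - r) * (A r / (A r + B)) / (B / (A r + B)) = c ^ (t - r) * A r / B
    field_simp
  rw [hrhs, hq]
  calc A t / (A t + B) ≤ A t / B := by
        apply div_le_div_of_nonneg_left (hA t) hB
        linarith [hA t]
    _ ≤ c ^ (t - r) * A r / B := by gcongr
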